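/- A cooperative game with transferable utility on a finite player set has a nonempty core if and only if it is balanced; i.e., the core is nonempty iff for every balanced collection of coalitions with balancing weights, the weighted sum of coalition values does not exceed the value of the grand coalition (Bondareva–Shapley theorem). -/

import Mathlib

open Finset

open scoped InnerProductSpace

section BondarevaAux

variable {m E : Type*} [Fintype m] [DecidableEq m] [AddCommGroup E] [Module ℝ E]

lemma cone_caratheodory (w : m → E) :
    ∀ (t : Finset m) (c : m → ℝ), (∀ j ∈ t, 0 ≤ c j) →
    ∃ s : Finset m, s ⊆ t ∧ LinearIndependent ℝ (fun j : s => w j) ∧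
      ∃ d : m → ℝ, (∀ j ∈ s, 0 ≤ d j) ∧ ∑ j ∈ s, d j • w j = ∑ j ∈ t, c j • w j := by
  intro t
  induction t using Finset.strongInduction with
  | _ t ih =>
    intro c hc
    by_cases hli : LinearIndependent ℝ (fun j : t => w j)
    · exact ⟨t, Finset.Subset.refl t, hli, c, hc, rfl⟩
    · -- extract a dependence relation
      obtain ⟨g₀, hg₀sum, j₁, hgj₁⟩ := Fintype.not_linearIndependent_iff.mp hli
      classical
      have key : ∀ g : m → ℝ, (∑ j ∈ t, g j • w j = 0) → (∃ j ∈ t, 0 < g j) →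
          ∃ s : Finset m, s ⊆ t ∧ LinearIndependent ℝ (fun j : s => w j) ∧
          ∃ d : m → ℝ, (∀ j ∈ s, 0 ≤ d j) ∧ ∑ j ∈ s, d j • w j = ∑ j ∈ t, c j • w j := by
        rintro g hg'sum ⟨jp, hjpt, hjp⟩
        have hTne : (t.filter (fun j => 0 < g j)).Nonempty :=
          ⟨jp, Finset.mem_filter.mpr ⟨hjpt, hjp⟩⟩
        obtain ⟨j₀, hj₀mem, hj₀min⟩ := Finset.exists_min_image _ (fun j => c j / g j) hTne
        have hj₀t : j₀ ∈ t := (Finset.mem_filter.mp hj₀mem).1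
        have hgj₀ : 0 < g j₀ := (Finset.mem_filter.mp hj₀mem).2
        set θ := c j₀ / g j₀ with hθ
        have hθ0 : 0 ≤ θ := div_nonneg (hc j₀ hj₀t) hgj₀.le
        set c' : m → ℝ := fun j => c j - θ * g j with hc'
        have hc'nonneg : ∀ j ∈ t, 0 ≤ c' j := by
          intro j hj
          by_cases h : 0 < g j
          · have h2 : θ ≤ c j / g j := hj₀min j (Finset.mem_filter.mpr ⟨hj, h⟩)
            simp only [hc']
            nlinarith [(le_div_iff₀ h).mp h2]
          · push_neg at h
            simp only [hc']
            nlinarith [hc j hj]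
        have hc'j₀ : c' j₀ = 0 := by
          simp only [hc', hθ]
          field_simp
          ring
        have hsum : ∑ j ∈ t, c' j • w j = ∑ j ∈ t, c j • w j := by
          simp only [hc', sub_smul, Finset.sum_sub_distrib]
          rw [show (∑ j ∈ t, (θ * g j) • w j) = θ • ∑ j ∈ t, g j • w j by
            rw [Finset.smul_sum]; exact Finset.sum_congr rfl fun j _ => (smul_smul θ (g j) (w j)).symm]
          rw [hg'sum, smul_zero, sub_zero]
        have herase : ∑ j ∈ t.erase j₀, c' j • w j = ∑ j ∈ t, c j • w j := by
          rw [← hsum, ← Finset.add_sum_erase t _ hj₀t, hc'j₀, zero_smul, zero_add]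
        obtain ⟨s, hs, hsli, d, hd, hdsum⟩ := ih (t.erase j₀) (Finset.erase_ssubset hj₀t) c'
          (fun j hj => hc'nonneg j (Finset.mem_of_mem_erase hj))
        exact ⟨s, hs.trans (Finset.erase_subset _ _), hsli, d, hd, by rw [hdsum, herase]⟩
      -- extend g₀ to all of m
      set gg : m → ℝ := fun j => if h : j ∈ t then g₀ ⟨j, h⟩ else 0 with hgg
      have hggsum : ∑ j ∈ t, gg j • w j = 0 := by
        rw [← hg₀sum, ← Finset.sum_attach t (fun j => gg j • w j)]
        exact Finset.sum_congr rfl fun j _ => by simp [hgg, j.2]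
      have hggj₁ : gg (j₁ : m) ≠ 0 := by simpa [hgg, j₁.2] using hgj₁
      rcases lt_or_gt_of_ne hggj₁ with h | h
      · refine key (-gg) (by simp [neg_smul, Finset.sum_neg_distrib, hggsum]) ⟨j₁, j₁.2, by simpa using h⟩
      · exact key gg hggsum ⟨j₁, j₁.2, h⟩

end BondarevaAux

section Farkas
variable {m n : Type*} [Fintype m] [DecidableEq m] [Fintype n]

local notation "E" => EuclideanSpace ℝ n

lemma coneSet_closed (w : m → E) :
    IsClosed {x : E | ∃ c : m → ℝ, (∀ j, 0 ≤ c j) ∧ x = ∑ j, c j • w j} := by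
  classical
  have hEq : {x : E | ∃ c : m → ℝ, (∀ j, 0 ≤ c j) ∧ x = ∑ j, c j • w j} =
      ⋃ s ∈ {s : Finset m | LinearIndependent ℝ (fun j : s => w j)},
        (fun c : s → ℝ => ∑ j : s, c j • w (j : m)) '' {c | ∀ j, 0 ≤ c j} := by
    ext x
    simp only [Set.mem_setOf_eq, Set.mem_iUnion, Set.mem_image, exists_prop]
    constructor
    · rintro ⟨c, hc, rfl⟩
      obtain ⟨s, _, hsli, d, hd, hdsum⟩ :=
        cone_caratheodory w Finset.univ c (fun j _ => hc j)
      refine ⟨s, hsli, fun j => d j, fun j => hd j j.2, ?_⟩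
      rw [← Finset.sum_attach s (fun j => d j • w j)] at hdsum
      simpa [Finset.sum_attach] using hdsum
    · rintro ⟨s, hsli, c, hc, rfl⟩
      refine ⟨fun j => if h : j ∈ s then c ⟨j, h⟩ else 0, ?_, ?_⟩
      · intro j; by_cases h : j ∈ s <;> simp [h]; exact hc ⟨j, h⟩
      · rw [← Finset.sum_subset (Finset.subset_univ s) (by intro j _ hj; simp [hj])]
        rw [← Finset.sum_attach s]
        exact Finset.sum_congr rfl fun j _ => by simp [j.2]
  rw [hEq]
  refine Set.Finite.isClosed_biUnion (Set.toFinite _) ?_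
  intro s hsli
  have hinj : LinearMap.ker
      ((LinearMap.lsum ℝ (fun _ : s => ℝ) ℝ) (fun j => LinearMap.smulRight LinearMap.id (w (j : m)))
        : (s → ℝ) →ₗ[ℝ] E) = ⊥ := by
    rw [LinearMap.ker_eq_bot']
    intro c hc
    simp only [LinearMap.lsum_apply, LinearMap.coe_sum, Finset.sum_apply, LinearMap.comp_apply,
      LinearMap.smulRight_apply, LinearMap.id_apply, LinearMap.coe_comp, Function.comp_apply,
      LinearMap.proj_apply] at hc
    have := Fintype.linearIndependent_iff.mp hsli c hc
    funext j; exact this j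
  have hce := LinearMap.isClosedEmbedding_of_injective hinj
  have hclosed : IsClosed {c : s → ℝ | ∀ j, 0 ≤ c j} := by
    have : {c : s → ℝ | ∀ j, 0 ≤ c j} = ⋂ j, {c | 0 ≤ c j} := by ext; simp [Set.mem_iInter]
    rw [this]
    exact isClosed_iInter fun j => isClosed_le continuous_const (continuous_apply j)
  have := hce.isClosedMap _ hclosed
  convert this using 2
  ext c
  simp [LinearMap.lsum_apply]

open scoped InnerProductSpace in
lemma farkas_cone (w : m → E) (b : E)
    (h : ∀ y : E, (∀ j, 0 ≤ ⟪w j, y⟫_ℝ) → 0 ≤ ⟪b, y⟫_ℝ) :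
    ∃ c : m → ℝ, (∀ j, 0 ≤ c j) ∧ b = ∑ j, c j • w j := by
  classical
  by_contra hb
  set Kset : Set E := {x : E | ∃ c : m → ℝ, (∀ j, 0 ≤ c j) ∧ x = ∑ j, c j • w j} with hK
  have hbK : b ∉ Kset := hb
  set K : ConvexCone ℝ E :=
    { carrier := Kset
      smul_mem' := by
        rintro t ht x ⟨c, hc, rfl⟩
        exact ⟨fun j => t * c j, fun j => mul_nonneg ht.le (hc j),
          by rw [Finset.smul_sum]; exact Finset.sum_congr rfl fun j _ => smul_smul t (c j) (w j)⟩
      add_mem' := by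
        rintro x ⟨c, hc, rfl⟩ y ⟨d, hd, rfl⟩
        exact ⟨fun j => c j + d j, fun j => add_nonneg (hc j) (hd j),
          by rw [← Finset.sum_add_distrib]; exact Finset.sum_congr rfl fun j _ => (add_smul _ _ _).symm⟩ }
  have hKne : (K : Set E).Nonempty := ⟨0, ⟨fun _ => 0, fun _ => le_refl _, by simp⟩⟩
  have hKcl : IsClosed (K : Set E) := coneSet_closed w
  obtain ⟨y, hy1, hy2⟩ : ∃ y : E, (∀ x ∈ K, 0 ≤ ⟪x, y⟫_ℝ) ∧ ⟪y, b⟫_ℝ < 0 := by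
    let P : ProperCone ℝ E :=
      { carrier := Kset
        add_mem' := fun hx hy => K.add_mem hx hy
        zero_mem' := ⟨fun _ => 0, fun _ => le_refl _, by simp⟩
        smul_mem' := by
          rintro t x ⟨d, hd, rfl⟩
          exact ⟨fun j => (t : ℝ) * d j, fun j => mul_nonneg t.2 (hd j),
            by change (t : ℝ) • (∑ j, d j • w j : E) = _; rw [Finset.smul_sum]; exact Finset.sum_congr rfl fun j _ => smul_smul _ (d j) (w j)⟩
        isClosed' := hKcl }
    obtain ⟨y, hy1', hy2'⟩ := P.hyperplane_separation' (x₀ := b) hbK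
    exact ⟨y, hy1', by rwa [real_inner_comm]⟩
  have hwy : ∀ j, 0 ≤ ⟪w j, y⟫_ℝ := by
    intro j
    refine hy1 (w j) ⟨fun k => if k = j then 1 else 0, fun k => by positivity, ?_⟩
    simp [ite_smul]
  have := h y hwy
  rw [real_inner_comm] at hy2
  linarith
end Farkas

/-- Bondareva–Shapley theorem: a TU game has a nonempty core iff it is balanced. -/
theorem bondareva_shapley {ι : Type*} [Fintype ι] [DecidableEq ι]
    (v : Finset ι → ℝ) (hv0 : v ∅ = 0) :
    (∃ x : ι → ℝ, ∑ i, x i = v Finset.univ ∧ ∀ S : Finset ι, v S ≤ ∑ i ∈ S, x i) ↔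
    (∀ lam : Finset ι → ℝ, (∀ S, 0 ≤ lam S) →
      (∀ i : ι, ∑ S ∈ Finset.univ.filter (fun S : Finset ι => i ∈ S), lam S = 1) →
      ∑ S : Finset ι, lam S * v S ≤ v Finset.univ) := by
  classical
  constructor
  · rintro ⟨x, hsum, hS⟩ lam hlam0 hlam1
    have step1 : ∑ S : Finset ι, lam S * v S ≤ ∑ S : Finset ι, lam S * ∑ i ∈ S, x i :=
      Finset.sum_le_sum fun S _ => mul_le_mul_of_nonneg_left (hS S) (hlam0 S)
    have step2 : ∑ S : Finset ι, lam S * ∑ i ∈ S, x i = ∑ i, x i := by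
      have h1 : ∀ S : Finset ι, lam S * ∑ i ∈ S, x i
          = ∑ i, if i ∈ S then lam S * x i else 0 := by
        intro S
        rw [Finset.mul_sum, ← Finset.sum_filter]
        congr 1
        rw [Finset.filter_mem_eq_inter, Finset.univ_inter]
      simp_rw [h1]
      rw [Finset.sum_comm]
      refine Finset.sum_congr rfl fun i _ => ?_
      have : ∑ S : Finset ι, (if i ∈ S then lam S * x i else 0)
          = (∑ S ∈ Finset.univ.filter (fun S : Finset ι => i ∈ S), lam S) * x i := by
        rw [Finset.sum_filter, Finset.sum_mul]
        exact Finset.sum_congr rfl fun S _ => by split <;> simp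
      rw [this, hlam1 i, one_mul]
    calc ∑ S : Finset ι, lam S * v S ≤ ∑ S : Finset ι, lam S * ∑ i ∈ S, x i := step1
      _ = ∑ i, x i := step2
      _ = v Finset.univ := hsum
  · intro hbal
    by_contra hcore
    -- set up the Farkas data
    set J := Option (Finset ι) with hJ
    set a : J → ι → ℝ := fun j i => match j with
      | some S => if i ∈ S then 1 else 0
      | none => -1 with ha
    set w : (ι ⊕ ι ⊕ J) → EuclideanSpace ℝ J := fun k => match k with
      | .inl i => WithLp.toLp 2 (fun j => a j i)
      | .inr (.inl i) => WithLp.toLp 2 (fun j => -(a j i))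
      | .inr (.inr j0) => WithLp.toLp 2 (fun j => if j = j0 then (-1 : ℝ) else 0) with hw
    set b : EuclideanSpace ℝ J := WithLp.toLp 2 (fun j => match j with
      | some S => v S
      | none => -(v Finset.univ)) with hb
    -- b is not in the cone
    have hbnotin : ¬ ∃ c : (ι ⊕ ι ⊕ J) → ℝ, (∀ k, 0 ≤ c k) ∧ b = ∑ k, c k • w k := by
      rintro ⟨c, hc, hbc⟩
      set x : ι → ℝ := fun i => c (.inl i) - c (.inr (.inl i)) with hx
      have heval : ∀ j : J, b j = (∑ i, x i * a j i) - c (.inr (.inr j)) := by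
        intro j
        have : b j = ∑ k, c k • w k j := by
          rw [hbc, WithLp.ofLp_sum]; exact Finset.sum_apply j Finset.univ _
        rw [this]
        rw [Fintype.sum_sum_type, Fintype.sum_sum_type]
        simp only [hw, smul_eq_mul]
        rw [show (∑ j0 : J, c (.inr (.inr j0)) * (if j = j0 then (-1:ℝ) else 0))
            = -c (.inr (.inr j)) by
          rw [Finset.sum_eq_single j]
          · simp
          · intro j0 _ hne; simp [Ne.symm hne]
          · simp]
        simp only [hx, sub_mul, mul_neg]
        rw [Finset.sum_sub_distrib]
        rw [Finset.sum_neg_distrib]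
        ring
      have hineq : ∀ S : Finset ι, v S ≤ ∑ i ∈ S, x i := by
        intro S
        have h1 := heval (some S)
        have h2 : ∑ i, x i * a (some S) i = ∑ i ∈ S, x i := by
          simp only [ha, mul_ite, mul_one, mul_zero]
          rw [Finset.sum_ite_mem, Finset.univ_inter]
        have h3 : b (some S) = v S := rfl
        have := hc (.inr (.inr (some S)))
        rw [h3, h2] at h1
        linarith
      have hle : ∑ i, x i ≤ v Finset.univ := by
        have h1 := heval none
        have h2 : ∑ i, x i * a none i = -∑ i, x i := by
          simp only [ha]; rw [← Finset.sum_neg_distrib]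
          exact Finset.sum_congr rfl fun i _ => by ring
        have h3 : b none = -(v Finset.univ) := rfl
        have := hc (.inr (.inr none))
        rw [h3, h2] at h1
        linarith
      exact hcore ⟨x, le_antisymm hle (by simpa using hineq Finset.univ), hineq⟩
    -- apply Farkas
    have hfar := mt (farkas_cone w b) hbnotin
    push_neg at hfar
    obtain ⟨y, hwy, hby⟩ := hfar
    set μ : J → ℝ := fun j => -(y j) with hμ
    have hinner : ∀ (u : EuclideanSpace ℝ J), ⟪u, y⟫_ℝ = ∑ j, u j * y j := by
      intro u
      simp [PiLp.inner_apply, RCLike.inner_apply, conj_trivial, mul_comm]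
    have hμ0 : ∀ j, 0 ≤ μ j := by
      intro j0
      have := hwy (.inr (.inr j0))
      rw [hinner] at this
      rw [show (∑ j : J, w (.inr (.inr j0)) j * y j) = -(y j0) by
        rw [Finset.sum_eq_single j0]
        · simp [hw]
        · intro j _ hne; simp [hw, hne]
        · simp]
        at this
      simpa [hμ] using this
    have heq : ∀ i, ∑ j, a j i * μ j = 0 := by
      intro i
      have h1 := hwy (.inl i)
      have h2 := hwy (.inr (.inl i))
      rw [hinner] at h1 h2
      simp only [hw] at h1 h2
      have h2' : ∑ j, a j i * y j ≤ 0 := by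
        rw [← neg_nonneg, ← Finset.sum_neg_distrib]
        convert h2 using 2 with j
        ring
      have h1' : 0 ≤ ∑ j, a j i * y j := h1
      have : ∑ j, a j i * y j = 0 := le_antisymm h2' h1'
      rw [← neg_eq_zero, ← Finset.sum_neg_distrib] at this
      rw [← this]
      exact Finset.sum_congr rfl fun j _ => by simp only [hμ]; ring
    have hbpos : 0 < ∑ j, b j * μ j := by
      rw [hinner] at hby
      have hμy : ∑ j, b j * μ j = -∑ j, b j * y j := by
        rw [← Finset.sum_neg_distrib]
        exact Finset.sum_congr rfl fun j _ => by simp only [hμ]; ring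
      rw [hμy]
      linarith
    -- unpack the Option sums
    have heq' : ∀ i, ∑ S ∈ Finset.univ.filter (fun S : Finset ι => i ∈ S), μ (some S) = μ none := by
      intro i
      have := heq i
      rw [Fintype.sum_option] at this
      simp only [ha] at this
      rw [Finset.sum_filter]
      have h2 : ∑ S : Finset ι, (if i ∈ S then μ (some S) else 0)
          = ∑ S : Finset ι, (if i ∈ S then (1:ℝ) else 0) * μ (some S) := by
        exact Finset.sum_congr rfl fun S _ => by split <;> simp
      rw [h2]
      linarith
    have hbpos' : μ none * v Finset.univ < ∑ S : Finset ι, μ (some S) * v S := by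
      rw [Fintype.sum_option] at hbpos
      simp only [hb] at hbpos
      have : ∑ S : Finset ι, v S * μ (some S) = ∑ S : Finset ι, μ (some S) * v S :=
        Finset.sum_congr rfl fun S _ => mul_comm _ _
      nlinarith [hbpos]
    rcases eq_or_lt_of_le (hμ0 none) with hz | hpos
    · -- μ none = 0 : all μ (some S) with S nonempty vanish
      have hzero : ∀ S : Finset ι, S.Nonempty → μ (some S) = 0 := by
        rintro S ⟨i, hi⟩
        have hs := heq' i
        rw [← hz] at hs
        have := (Finset.sum_eq_zero_iff_of_nonneg (fun S _ => hμ0 (some S))).mp hs S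
          (Finset.mem_filter.mpr ⟨Finset.mem_univ S, hi⟩)
        exact this
      have : ∑ S : Finset ι, μ (some S) * v S = 0 := by
        refine Finset.sum_eq_zero fun S _ => ?_
        rcases Finset.eq_empty_or_nonempty S with rfl | hne
        · rw [hv0, mul_zero]
        · rw [hzero S hne, zero_mul]
      rw [this, ← hz] at hbpos'
      simp at hbpos'
    · -- μ none > 0 : normalize to get a balanced family
      set lam : Finset ι → ℝ := fun S => μ (some S) / μ none with hlam
      have h1 : ∀ S, 0 ≤ lam S := fun S => div_nonneg (hμ0 (some S)) hpos.le
      have h2 : ∀ i : ι, ∑ S ∈ Finset.univ.filter (fun S : Finset ι => i ∈ S), lam S = 1 := by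
        intro i
        simp only [hlam]
        rw [← Finset.sum_div, heq' i, div_self hpos.ne']
      have h3 := hbal lam h1 h2
      have h4 : ∑ S : Finset ι, lam S * v S = (∑ S : Finset ι, μ (some S) * v S) / μ none := by
        rw [Finset.sum_div]
        exact Finset.sum_congr rfl fun S _ => by rw [hlam]; ring
      rw [h4, div_le_iff₀ hpos] at h3
      nlinarith [h3]
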